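/- arXiv:1210.3187 — 3 statements merged into one kernel-verified Lean document; each statement's English description precedes it below -/
import Mathlib

section
/- For the random bipartite graph G(n,n,p) with p ∈ (0,1) fixed, the probability that G(n,n,p) has no perfect matching is at most γ(n) := 2n(1−p)^n + ε_n, where ε_n := 2 Σ_{a=2}^{⌊(n+1)/2⌋} n^{2a−1}(1−p)^{an}(1−p)^{−a²}. Moreover Σ_{n≥1} n·γ(n) < ∞. -/
open Finset MeasureTheory ProbabilityTheory
open scoped Classical

/-- The realized random bipartite graph on `Fin n ⊕ Fin n` built from the infinite array of
edge events `E i j`, `i j : ℕ`: left vertex `i` is adjacent to right vertex `j`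
iff `ω ∈ E i j`. -/
def biGraphN {Ω : Type*} (E : ℕ → ℕ → Set Ω) (n : ℕ) (ω : Ω) :
    SimpleGraph (Fin n ⊕ Fin n) :=
  SimpleGraph.fromRel
    (fun u v => ∃ i j : Fin n, u = Sum.inl i ∧ v = Sum.inr j ∧ ω ∈ E (i : ℕ) (j : ℕ))

/-- `γ(n) = 2n(1−p)^n + ε_n` with
`ε_n = 2 Σ_{a=2}^{⌊(n+1)/2⌋} n^{2a−1}(1−p)^{an}(1−p)^{−a²}`. -/
noncomputable def gammaBound (p : ℝ) (n : ℕ) : ℝ :=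
  2 * n * (1 - p) ^ n +
    2 * ∑ a ∈ Finset.Icc 2 ((n + 1) / 2),
      (n : ℝ) ^ (2 * a - 1) * (1 - p) ^ (a * n) * (1 - p) ^ (-((a : ℤ) ^ 2))

section Aux
open Filter
open scoped ENNReal
lemma biGraphN_adj {Ω : Type*} (E : ℕ → ℕ → Set Ω) (n : ℕ) (ω : Ω) (u v : Fin n ⊕ Fin n) :
    (biGraphN E n ω).Adj u v ↔ u ≠ v ∧
      ((∃ i j : Fin n, u = Sum.inl i ∧ v = Sum.inr j ∧ ω ∈ E (i : ℕ) (j : ℕ)) ∨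
       (∃ i j : Fin n, v = Sum.inl i ∧ u = Sum.inr j ∧ ω ∈ E (i : ℕ) (j : ℕ))) := by
  simp [biGraphN, SimpleGraph.fromRel_adj]

lemma pm_iff {Ω : Type*} (E : ℕ → ℕ → Set Ω) (n : ℕ) (ω : Ω) :
    (∃ M : (biGraphN E n ω).Subgraph, M.IsPerfectMatching) ↔
    ∃ f : Fin n → Fin n, Function.Injective f ∧ ∀ i : Fin n, ω ∈ E (i : ℕ) ((f i : ℕ)) := by
  constructor
  · rintro ⟨M, hmat, hspan⟩
    have hf : ∀ i : Fin n, ∃ j : Fin n, M.Adj (Sum.inl i) (Sum.inr j) ∧ ω ∈ E (i:ℕ) (j:ℕ) := by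
      intro i
      obtain ⟨w, hw, -⟩ := hmat (hspan (Sum.inl i))
      have hadj := (biGraphN_adj E n ω _ _).1 (M.adj_sub hw)
      rcases hadj.2 with ⟨i', j, hi, hj, hEij⟩ | ⟨i', j, hi, hj, hEij⟩
      · cases hi; exact ⟨j, hj ▸ hw, hEij⟩
      · exact absurd hj (by simp)
    choose f hadj hEf using hf
    refine ⟨f, ?_, hEf⟩
    intro i i' hii'
    have h1 : M.Adj (Sum.inr (f i)) (Sum.inl i) := (hadj i).symm
    have h2 : M.Adj (Sum.inr (f i)) (Sum.inl i') := by rw [hii']; exact (hadj i').symm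
    obtain ⟨w, -, huniq⟩ := hmat (hspan (Sum.inr (f i)))
    have := (huniq _ h1).trans (huniq _ h2).symm
    simpa using this
  · rintro ⟨f, hinj, hE⟩
    have hbij : Function.Bijective f := (Finite.injective_iff_bijective).1 hinj
    refine ⟨⟨Set.univ,
      fun u v => (∃ i, u = Sum.inl i ∧ v = Sum.inr (f i)) ∨
                 (∃ i, v = Sum.inl i ∧ u = Sum.inr (f i)), ?_, fun {v w} _ => Set.mem_univ _,
        ?_⟩, ?_, fun _ => Set.mem_univ _⟩
    · rintro u v (⟨i, rfl, rfl⟩ | ⟨i, rfl, rfl⟩)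
      · exact (biGraphN_adj E n ω _ _).2 ⟨by simp, Or.inl ⟨i, f i, rfl, rfl, hE i⟩⟩
      · exact (biGraphN_adj E n ω _ _).2 ⟨by simp, Or.inr ⟨i, f i, rfl, rfl, hE i⟩⟩
    · refine ⟨?_⟩
      rintro u v (h | h)
      · exact Or.inr h
      · exact Or.inl h
    · rintro (i | j) -
      · refine ⟨Sum.inr (f i), Or.inl ⟨i, rfl, rfl⟩, ?_⟩
        rintro w (⟨i', hi, rfl⟩ | ⟨i', hw, hi⟩)
        · cases hi; rfl
        · exact absurd hi (by simp)
      · obtain ⟨i, hi⟩ := hbij.2 j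
        refine ⟨Sum.inl i, Or.inr ⟨i, rfl, hi ▸ rfl⟩, ?_⟩
        rintro w (⟨i', hi', rfl⟩ | ⟨i', rfl, hi'⟩)
        · exact absurd hi' (by simp)
        · have : f i' = j := by simpa using hi'.symm
          rw [hinj (this.trans hi.symm)]

lemma hall_violation {n : ℕ} (r : Fin n → Fin n → Prop)
    (h : ¬ ∃ f : Fin n → Fin n, Function.Injective f ∧ ∀ i, r i (f i)) :
    ∃ a ∈ Finset.Icc 1 ((n + 1) / 2), ∃ A S : Finset (Fin n), A.card = a ∧ S.card = a - 1 ∧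
      ((∀ i ∈ A, ∀ j ∉ S, ¬ r i j) ∨ (∀ j ∈ A, ∀ i ∉ S, ¬ r i j)) := by
  set t : Fin n → Finset (Fin n) := fun i => univ.filter (fun j => r i j) with ht
  have hviol : ∃ A : Finset (Fin n), (A.biUnion t).card < A.card := by
    by_contra hc
    push_neg at hc
    obtain ⟨f, hf, hmem⟩ := (Finset.all_card_le_biUnion_card_iff_exists_injective t).1 hc
    exact h ⟨f, hf, fun i => by simpa [ht] using hmem i⟩
  -- pick a minimal violating set
  obtain ⟨A, hA, hmin⟩ := Finset.exists_min_image
    ((univ : Finset (Finset (Fin n))).filter (fun A => (A.biUnion t).card < A.card))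
    Finset.card (by obtain ⟨A, hA⟩ := hviol; exact ⟨A, by simp [hA]⟩)
  simp only [mem_filter, mem_univ, true_and] at hA
  simp only [mem_filter, mem_univ, true_and] at hmin
  set a := A.card with ha
  set N := A.biUnion t with hNdef
  have hNlt : N.card < a := hA
  have ha1 : 1 ≤ a := by omega
  have han : a ≤ n := by simpa using Finset.card_le_card (Finset.subset_univ A)
  have hNge : a - 1 ≤ N.card := by
    rcases Nat.eq_or_lt_of_le ha1 with h1 | h2
    · omega
    · -- a ≥ 2 : use minimality on A minus a point
      obtain ⟨x, hx⟩ := Finset.card_pos.1 (by omega : 0 < A.card)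
      have hcard : (A.erase x).card = a - 1 := by rw [Finset.card_erase_of_mem hx]
      have hne : ¬ ((A.erase x).biUnion t).card < (A.erase x).card := by
        intro hlt
        have := hmin _ hlt
        rw [hcard] at this; omega
      push_neg at hne
      calc a - 1 = (A.erase x).card := hcard.symm
        _ ≤ ((A.erase x).biUnion t).card := hne
        _ ≤ N.card := Finset.card_le_card
            (Finset.biUnion_subset_biUnion_of_subset_left t (Finset.erase_subset x A))
  have hNcard : N.card = a - 1 := by omega
  by_cases ham : a ≤ (n + 1) / 2
  · obtain ⟨S, hNS, -, hScard⟩ := Finset.exists_subsuperset_card_eq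
      (Finset.subset_univ N) (by omega : N.card ≤ a - 1)
      (by simpa using (by omega : a - 1 ≤ n))
    refine ⟨a, by simp [Finset.mem_Icc]; omega, A, S, rfl, hScard, Or.inl ?_⟩
    intro i hi j hjS hrij
    exact hjS (hNS (Finset.mem_biUnion.2 ⟨i, hi, by simp [ht, hrij]⟩))
  · -- complement trick
    set B := Nᶜ with hB
    have hBcard : B.card = n - a + 1 := by
      rw [hB, Finset.card_compl, hNcard]
      simp; omega
    set N' : Finset (Fin n) := B.biUnion (fun j => univ.filter (fun i => r i j)) with hN'
    have hN'sub : N' ⊆ Aᶜ := by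
      intro i hi
      simp only [hN', Finset.mem_biUnion, mem_filter, mem_univ, true_and] at hi
      obtain ⟨j, hjB, hrij⟩ := hi
      rw [Finset.mem_compl]
      intro hiA
      exact (Finset.mem_compl.1 hjB) (Finset.mem_biUnion.2 ⟨i, hiA, by simp [ht, hrij]⟩)
    have hN'card : N'.card ≤ n - a := by
      have := Finset.card_le_card hN'sub
      rwa [Finset.card_compl, Fintype.card_fin] at this
    obtain ⟨S, hNS, -, hScard⟩ := Finset.exists_subsuperset_card_eq
      (Finset.subset_univ N') (by omega : N'.card ≤ (n - a + 1) - 1)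
      (by simpa using (by omega : (n - a + 1) - 1 ≤ n))
    refine ⟨n - a + 1, by simp [Finset.mem_Icc]; omega, B, S, hBcard, hScard, Or.inr ?_⟩
    intro j hj i hiS hrij
    exact hiS (hNS (Finset.mem_biUnion.2 ⟨j, hj, by simp [hrij]⟩))

lemma meas_inter_compl {Ω : Type*} [MeasurableSpace Ω] (μ : Measure Ω) [IsProbabilityMeasure μ]
    (p : ℝ) (hp0 : 0 ≤ p) (hp1 : p ≤ 1)
    (E : ℕ → ℕ → Set Ω) (hEmeas : ∀ i j, MeasurableSet (E i j))
    (hindep : iIndepSet (fun q : ℕ × ℕ => E q.1 q.2) μ)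
    (hprob : ∀ i j, μ (E i j) = ENNReal.ofReal p)
    (F : Finset (ℕ × ℕ)) :
    μ (⋂ x ∈ F, (E x.1 x.2)ᶜ) = ENNReal.ofReal (1 - p) ^ F.card := by
  have hind : iIndep (fun q : ℕ × ℕ => MeasurableSpace.generateFrom {E q.1 q.2}) μ :=
    (iIndepSet_iff_iIndep _ μ).1 hindep
  have hmeas : ∀ x : ℕ × ℕ, x ∈ F →
      MeasurableSet[MeasurableSpace.generateFrom {E x.1 x.2}] ((E x.1 x.2)ᶜ) :=
    fun x _ => (MeasurableSpace.measurableSet_generateFrom (Set.mem_singleton _)).compl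
  rw [hind.meas_biInter hmeas]
  have hcompl : ∀ x : ℕ × ℕ, μ ((E x.1 x.2)ᶜ) = ENNReal.ofReal (1 - p) := by
    intro x
    rw [measure_compl (hEmeas x.1 x.2) (measure_ne_top μ _), hprob,
      measure_univ, ENNReal.ofReal_sub _ hp0, ENNReal.ofReal_one]
  simp [hcompl, Finset.prod_const]

lemma biInter_prod_eq {n : ℕ} (E : ℕ → ℕ → Set Ω) (A B : Finset (Fin n)) :
    (⋂ x ∈ (A.map Fin.valEmbedding) ×ˢ (B.map Fin.valEmbedding), (E x.1 x.2)ᶜ)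
      = ⋂ i ∈ A, ⋂ j ∈ B, (E (i : ℕ) (j : ℕ))ᶜ := by
  ext ω
  simp only [Set.mem_iInter, Finset.mem_product, Finset.mem_map, Fin.valEmbedding_apply,
    Set.mem_compl_iff]
  constructor
  · intro h i hi j hj
    exact h (i, j) ⟨⟨i, hi, rfl⟩, ⟨j, hj, rfl⟩⟩
  · rintro h ⟨x, y⟩ ⟨⟨i, hi, rfl⟩, ⟨j, hj, rfl⟩⟩
    exact h i hi j hj

lemma step1 {Ω : Type*} [MeasurableSpace Ω] (μ : Measure Ω) [IsProbabilityMeasure μ]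
    (p : ℝ) (hp0 : 0 ≤ p) (hp1 : p ≤ 1)
    (E : ℕ → ℕ → Set Ω) (hEmeas : ∀ i j, MeasurableSet (E i j))
    (hindep : iIndepSet (fun q : ℕ × ℕ => E q.1 q.2) μ)
    (hprob : ∀ i j, μ (E i j) = ENNReal.ofReal p) (n : ℕ) :
    μ {ω | ¬ ∃ M : (biGraphN E n ω).Subgraph, M.IsPerfectMatching} ≤
      ∑ a ∈ Finset.Icc 1 ((n + 1) / 2),
        (2 * (n.choose a) * (n.choose (a - 1)) : ℝ≥0∞) *
          ENNReal.ofReal (1 - p) ^ (a * (n - a + 1)) := by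
  classical
  set m := (n + 1) / 2 with hm
  -- the bad events
  set BadL : Finset (Fin n) → Finset (Fin n) → Set Ω :=
    fun A S => ⋂ i ∈ A, ⋂ j ∈ Sᶜ, (E (i : ℕ) (j : ℕ))ᶜ with hBadL
  set BadR : Finset (Fin n) → Finset (Fin n) → Set Ω :=
    fun A S => ⋂ j ∈ A, ⋂ i ∈ Sᶜ, (E (i : ℕ) (j : ℕ))ᶜ with hBadR
  -- measures of bad events
  have hmeasL : ∀ A S : Finset (Fin n), μ (BadL A S) =
      ENNReal.ofReal (1 - p) ^ (A.card * Sᶜ.card) := by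
    intro A S
    simp only [hBadL]
    rw [← biInter_prod_eq E A Sᶜ, meas_inter_compl μ p hp0 hp1 E hEmeas hindep hprob]
    simp [Finset.card_map]
  have hmeasR : ∀ A S : Finset (Fin n), μ (BadR A S) =
      ENNReal.ofReal (1 - p) ^ (A.card * Sᶜ.card) := by
    intro A S
    have : BadR A S = ⋂ x ∈ (Sᶜ.map Fin.valEmbedding) ×ˢ (A.map Fin.valEmbedding),
        (E x.1 x.2)ᶜ := by
      rw [biInter_prod_eq E Sᶜ A]
      simp only [hBadR]
      ext ω; simp only [Set.mem_iInter]; tauto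
    rw [this, meas_inter_compl μ p hp0 hp1 E hEmeas hindep hprob]
    simp [Finset.card_map, Nat.mul_comm]
  -- event inclusion
  have hsub : {ω | ¬ ∃ M : (biGraphN E n ω).Subgraph, M.IsPerfectMatching} ⊆
      ⋃ a ∈ Finset.Icc 1 m, ⋃ A ∈ Finset.powersetCard a (univ : Finset (Fin n)),
        ⋃ S ∈ Finset.powersetCard (a - 1) (univ : Finset (Fin n)), (BadL A S ∪ BadR A S) := by
    intro ω hω
    rw [Set.mem_setOf_eq, pm_iff] at hω
    obtain ⟨a, ham, A, S, hAcard, hScard, hdisj⟩ :=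
      hall_violation (fun i j : Fin n => ω ∈ E (i : ℕ) (j : ℕ)) hω
    refine Set.mem_iUnion₂.2 ⟨a, ham, Set.mem_iUnion₂.2 ⟨A, ?_, Set.mem_iUnion₂.2 ⟨S, ?_, ?_⟩⟩⟩
    · exact (Finset.mem_powersetCard_univ).2 hAcard
    · exact (Finset.mem_powersetCard_univ).2 hScard
    · rcases hdisj with hL | hR
      · exact Or.inl (by
          simp only [hBadL, Set.mem_iInter, Set.mem_compl_iff]
          intro i hi j hj
          exact hL i hi j (Finset.mem_compl.1 hj))
      · exact Or.inr (by
          simp only [hBadR, Set.mem_iInter, Set.mem_compl_iff]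
          intro j hj i hi
          exact hR j hj i (Finset.mem_compl.1 hi))
  calc μ _ ≤ μ (⋃ a ∈ Finset.Icc 1 m, ⋃ A ∈ Finset.powersetCard a (univ : Finset (Fin n)),
        ⋃ S ∈ Finset.powersetCard (a - 1) (univ : Finset (Fin n)), (BadL A S ∪ BadR A S)) :=
      measure_mono hsub
    _ ≤ ∑ a ∈ Finset.Icc 1 m, μ (⋃ A ∈ Finset.powersetCard a (univ : Finset (Fin n)),
        ⋃ S ∈ Finset.powersetCard (a - 1) (univ : Finset (Fin n)), (BadL A S ∪ BadR A S)) :=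
      measure_biUnion_finset_le _ _
    _ ≤ ∑ a ∈ Finset.Icc 1 m, ∑ A ∈ Finset.powersetCard a (univ : Finset (Fin n)),
        μ (⋃ S ∈ Finset.powersetCard (a - 1) (univ : Finset (Fin n)), (BadL A S ∪ BadR A S)) :=
      Finset.sum_le_sum (fun a _ => measure_biUnion_finset_le _ _)
    _ ≤ ∑ a ∈ Finset.Icc 1 m, ∑ A ∈ Finset.powersetCard a (univ : Finset (Fin n)),
        ∑ S ∈ Finset.powersetCard (a - 1) (univ : Finset (Fin n)), μ (BadL A S ∪ BadR A S) :=
      Finset.sum_le_sum (fun a _ => Finset.sum_le_sum (fun A _ => measure_biUnion_finset_le _ _))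
    _ ≤ ∑ a ∈ Finset.Icc 1 m, ∑ A ∈ Finset.powersetCard a (univ : Finset (Fin n)),
        ∑ S ∈ Finset.powersetCard (a - 1) (univ : Finset (Fin n)),
          (2 : ℝ≥0∞) * ENNReal.ofReal (1 - p) ^ (a * (n - a + 1)) := by
      refine Finset.sum_le_sum (fun a ha => Finset.sum_le_sum (fun A hA =>
        Finset.sum_le_sum (fun S hS => ?_)))
      have hAcard := (Finset.mem_powersetCard_univ).1 hA
      have hScard := (Finset.mem_powersetCard_univ).1 hS
      have ham := Finset.mem_Icc.1 ha
      have han : a ≤ n := by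
        rcases Nat.lt_or_ge n a with h | h
        · exfalso; omega
        · exact h
      have hcompl : Sᶜ.card = n - a + 1 := by
        rw [Finset.card_compl, hScard, Fintype.card_fin]; omega
      calc μ (BadL A S ∪ BadR A S) ≤ μ (BadL A S) + μ (BadR A S) := measure_union_le _ _
        _ = (2 : ℝ≥0∞) * ENNReal.ofReal (1 - p) ^ (a * (n - a + 1)) := by
          rw [hmeasL, hmeasR, hAcard, hcompl]; ring
    _ ≤ ∑ a ∈ Finset.Icc 1 m,
        (2 * (n.choose a) * (n.choose (a - 1)) : ℝ≥0∞) *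
          ENNReal.ofReal (1 - p) ^ (a * (n - a + 1)) := by
      refine Finset.sum_le_sum (fun a ha => ?_)
      rw [Finset.sum_const, Finset.sum_const, Finset.card_powersetCard,
        Finset.card_powersetCard]
      simp only [Finset.card_univ, Fintype.card_fin, nsmul_eq_mul]
      rw [← mul_assoc]
      apply le_of_eq
      push_cast
      ring

lemma Icc_one_eq {m : ℕ} (hm : 1 ≤ m) : Finset.Icc 1 m = insert 1 (Finset.Icc 2 m) := by
  ext x; simp [Finset.mem_Icc, Finset.mem_insert]; omega

lemma step2 (p : ℝ) (hp0 : 0 < p) (hp1 : p < 1) (n : ℕ) :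
    ∑ a ∈ Finset.Icc 1 ((n + 1) / 2), 2 * (n.choose a : ℝ) * (n.choose (a - 1)) *
      (1 - p) ^ (a * (n - a + 1)) ≤ gammaBound p n := by
  set q := 1 - p with hq
  have hq0 : 0 < q := by simp [hq]; linarith
  have hq1 : q < 1 := by simp [hq]; linarith
  rcases Nat.eq_zero_or_pos n with rfl | hn
  · simp [gammaBound]
  have hm : 1 ≤ (n + 1) / 2 := by omega
  rw [Icc_one_eq hm, Finset.sum_insert (by simp)]
  unfold gammaBound
  rw [← hq]
  apply add_le_add
  · apply le_of_eq
    have : 1 * (n - 1 + 1) = n := by omega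
    rw [this]
    push_cast [Nat.choose_one_right, Nat.choose_zero_right]
    ring
  · rw [Finset.mul_sum]
    apply Finset.sum_le_sum
    intro a ha
    rw [Finset.mem_Icc] at ha
    obtain ⟨ha2, ham⟩ := ha
    have han : a ≤ n := by omega
    have h1 : (n.choose a : ℝ) ≤ (n : ℝ) ^ a := by
      exact_mod_cast Nat.cast_le.2 (Nat.choose_le_pow n a)
    have h2 : (n.choose (a - 1) : ℝ) ≤ (n : ℝ) ^ (a - 1) := by
      exact_mod_cast Nat.cast_le.2 (Nat.choose_le_pow n (a - 1))
    have hpowpos : (0:ℝ) < q ^ (a * (n - a + 1)) := pow_pos hq0 _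
    have h3 : q ^ (a * (n - a + 1)) ≤ q ^ (a * n) * q ^ (-((a : ℤ) ^ 2)) := by
      have e1 : q ^ (a * n) * q ^ (-((a : ℤ) ^ 2)) = q ^ ((a * n : ℤ) - (a:ℤ)^2) := by
        rw [← zpow_natCast q (a * n), ← zpow_add₀ hq0.ne']
        have h' : ((a * n : ℕ) : ℤ) + -((a:ℤ)^2) = (a:ℤ) * n - (a:ℤ)^2 := by push_cast; ring
        rw [h']
      have e2 : q ^ (a * (n - a + 1)) = q ^ ((a * (n - a + 1) : ℕ) : ℤ) := by
        rw [zpow_natCast]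
      rw [e1, e2]
      apply zpow_le_zpow_right_of_le_one₀ hq0 hq1.le
      have : ((a * (n - a + 1) : ℕ) : ℤ) = (a:ℤ) * n - a^2 + a := by
        push_cast [Nat.cast_sub han]
        ring
      rw [this]
      have : (0:ℤ) < a := by positivity
      omega
    calc 2 * (n.choose a : ℝ) * (n.choose (a - 1)) * q ^ (a * (n - a + 1))
        ≤ 2 * ((n:ℝ) ^ a * (n:ℝ) ^ (a - 1)) * (q ^ (a * n) * q ^ (-((a : ℤ) ^ 2))) := by
          apply mul_le_mul
          · have hc1 : (0:ℝ) ≤ (n.choose (a-1) : ℝ) := by positivity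
            have hc2 : (0:ℝ) ≤ (n.choose a : ℝ) := by positivity
            nlinarith [pow_nonneg (Nat.cast_nonneg (α := ℝ) n) a,
              pow_nonneg (Nat.cast_nonneg (α := ℝ) n) (a-1)]
          · exact h3
          · exact hpowpos.le
          · positivity
      _ = 2 * ((n:ℝ) ^ (2 * a - 1) * q ^ (a * n) * q ^ (-((a : ℤ) ^ 2))) := by
          rw [← pow_add]
          have : a + (a - 1) = 2 * a - 1 := by omega
          rw [this]; ring

lemma step3 (p : ℝ) (hp0 : 0 < p) (hp1 : p < 1) :
    Summable (fun n : ℕ => (n : ℝ) * gammaBound p n) := by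
  set q := 1 - p with hqd
  have hq0 : 0 < q := by simp [hqd]; linarith
  have hq1 : q < 1 := by simp [hqd]; linarith
  have hqn : ‖q‖ < 1 := by rw [Real.norm_eq_abs, abs_of_pos hq0]; exact hq1
  set s := Real.sqrt q with hsd
  have hs0 : 0 < s := Real.sqrt_pos.2 hq0
  have hsq : s ^ 2 = q := Real.sq_sqrt hq0.le
  have hs1 : s < 1 := by nlinarith
  have hsn : ‖s‖ < 1 := by rw [Real.norm_eq_abs, abs_of_pos hs0]; exact hs1
  -- split
  have hsplit : ∀ n : ℕ, (n : ℝ) * gammaBound p n =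
      (n : ℝ) * (2 * n * q ^ n) +
      (n : ℝ) * (2 * ∑ a ∈ Finset.Icc 2 ((n + 1) / 2),
        (n : ℝ) ^ (2 * a - 1) * q ^ (a * n) * q ^ (-((a : ℤ) ^ 2))) := by
    intro n; unfold gammaBound; rw [← hqd]; ring
  rw [funext hsplit]
  apply Summable.add
  · have A : Summable (fun n : ℕ => (n : ℝ) ^ 2 * q ^ n) :=
      summable_pow_mul_geometric_of_norm_lt_one 2 hqn
    exact (A.mul_left 2).congr (fun n => by push_cast; ring)
  · -- the epsilon part
    set g : ℕ → ℝ := fun n => (n : ℝ) * (2 * ∑ a ∈ Finset.Icc 2 ((n + 1) / 2),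
        (n : ℝ) ^ (2 * a - 1) * q ^ (a * n) * q ^ (-((a : ℤ) ^ 2))) with hgd
    have hg0 : ∀ n, 0 ≤ g n := by
      intro n
      apply mul_nonneg (Nat.cast_nonneg n)
      apply mul_nonneg (by norm_num)
      apply Finset.sum_nonneg
      intro a _
      have : (0:ℝ) < q ^ (-((a : ℤ) ^ 2)) := zpow_pos hq0 _
      positivity
    have hbound : ∀ n : ℕ, 2 ≤ n → (n : ℝ) ^ 2 * s ^ (n - 1) ≤ 1 →
        g n ≤ 2 / q * ((n : ℝ) ^ 6 * q ^ n) := by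
      intro n hn2 hr1
      set r : ℝ := (n : ℝ) ^ 2 * s ^ (n - 1) with hrd
      have hr0 : 0 ≤ r := by positivity
      have hterm : ∀ a ∈ Finset.Icc 2 ((n + 1) / 2),
          (n : ℝ) ^ (2 * a - 1) * q ^ (a * n) * q ^ (-((a : ℤ) ^ 2)) ≤ r ^ 2 := by
        intro a ha
        rw [Finset.mem_Icc] at ha
        obtain ⟨ha2, ham⟩ := ha
        have han : a ≤ n := by omega
        have e1 : q ^ (a * n) * q ^ (-((a : ℤ) ^ 2)) = q ^ (a * (n - a)) := by
          rw [← zpow_natCast q (a * n), ← zpow_add₀ hq0.ne', ← zpow_natCast q (a * (n - a))]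
          have h' : ((a * (n - a) : ℕ) : ℤ) = ((a * n : ℕ) : ℤ) + -((a:ℤ) ^ 2) := by
            push_cast [Nat.cast_sub han]; ring
          rw [h']
        have e2 : q ^ (a * (n - a)) ≤ s ^ (a * (n - 1)) := by
          rw [← hsq, ← pow_mul]
          apply pow_le_pow_of_le_one hs0.le hs1.le
          have h1 : n - 1 ≤ 2 * (n - a) := by omega
          calc a * (n - 1) ≤ a * (2 * (n - a)) := Nat.mul_le_mul_left a h1
            _ = 2 * (a * (n - a)) := by ring
        have e3 : (n : ℝ) ^ (2 * a - 1) ≤ ((n : ℝ) ^ 2) ^ a := by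
          rw [← pow_mul]
          apply pow_le_pow_right₀ (by exact_mod_cast Nat.one_le_iff_ne_zero.2 (by omega))
          omega
        calc (n : ℝ) ^ (2 * a - 1) * q ^ (a * n) * q ^ (-((a : ℤ) ^ 2))
            = (n : ℝ) ^ (2 * a - 1) * (q ^ (a * n) * q ^ (-((a : ℤ) ^ 2))) := by ring
          _ = (n : ℝ) ^ (2 * a - 1) * q ^ (a * (n - a)) := by rw [e1]
          _ ≤ ((n : ℝ) ^ 2) ^ a * s ^ (a * (n - 1)) := by
              apply mul_le_mul e3 e2 (by positivity) (by positivity)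
          _ = r ^ a := by rw [hrd, mul_pow, ← pow_mul, ← pow_mul, Nat.mul_comm (n-1) a]
          _ ≤ r ^ 2 := pow_le_pow_of_le_one hr0 hr1 ha2
      have hsum : ∑ a ∈ Finset.Icc 2 ((n + 1) / 2),
          (n : ℝ) ^ (2 * a - 1) * q ^ (a * n) * q ^ (-((a : ℤ) ^ 2)) ≤ (n : ℝ) * r ^ 2 := by
        calc _ ≤ (Finset.Icc 2 ((n + 1) / 2)).card • (r ^ 2) :=
              Finset.sum_le_card_nsmul _ _ _ hterm
          _ = ((Finset.Icc 2 ((n + 1) / 2)).card : ℝ) * r ^ 2 := by rw [nsmul_eq_mul]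
          _ ≤ (n : ℝ) * r ^ 2 := by
              apply mul_le_mul_of_nonneg_right _ (by positivity)
              rw [Nat.card_Icc]
              exact_mod_cast Nat.cast_le.2 (by omega : (n + 1) / 2 + 1 - 2 ≤ n)
      have hqpow : s ^ (2 * (n - 1)) = q ^ (n - 1) := by rw [pow_mul, hsq]
      calc g n ≤ (n : ℝ) * (2 * ((n : ℝ) * r ^ 2)) := by
            rw [hgd]
            apply mul_le_mul_of_nonneg_left _ (Nat.cast_nonneg n)
            apply mul_le_mul_of_nonneg_left hsum (by norm_num)
        _ = 2 * (n : ℝ) ^ 6 * (s ^ (2 * (n - 1))) := by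
            rw [hrd]; ring
        _ = 2 * (n : ℝ) ^ 6 * q ^ (n - 1) := by rw [hqpow]
        _ = 2 / q * ((n : ℝ) ^ 6 * q ^ n) := by
            have : q ^ n = q ^ (n - 1) * q := by
              rw [← pow_succ]; congr 1; omega
            rw [this]; field_simp
    -- eventual smallness
    have hB : Summable (fun n : ℕ => (n : ℝ) ^ 2 * s ^ n) :=
      summable_pow_mul_geometric_of_norm_lt_one 2 hsn
    have htend : Tendsto (fun n : ℕ => (n : ℝ) ^ 2 * s ^ (n - 1)) atTop (nhds 0) := by
      have h1 : Tendsto (fun n : ℕ => (1 / s) * ((n : ℝ) ^ 2 * s ^ n)) atTop (nhds 0) := by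
        simpa using (hB.tendsto_atTop_zero.const_mul (1 / s))
      apply h1.congr'
      filter_upwards [eventually_ge_atTop 1] with n hn
      have : s ^ n = s ^ (n - 1) * s := by rw [← pow_succ]; congr 1; omega
      rw [this]; field_simp
    have hev : ∀ᶠ n : ℕ in atTop, (n : ℝ) ^ 2 * s ^ (n - 1) ≤ 1 := by
      filter_upwards [htend.eventually_lt_const one_pos] with n hn using hn.le
    obtain ⟨N, hN⟩ := (hev.and (eventually_ge_atTop 2)).exists_forall_of_atTop
    have hmaj : Summable (fun n : ℕ => 2 / q * ((n : ℝ) ^ 6 * q ^ n)) :=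
      (summable_pow_mul_geometric_of_norm_lt_one 6 hqn).mul_left _
    rw [← summable_nat_add_iff N]
    apply Summable.of_nonneg_of_le (fun n => hg0 _)
      (fun n => hbound (n + N) (hN (n + N) (Nat.le_add_left N n)).2
        (hN (n + N) (Nat.le_add_left N n)).1)
    exact (summable_nat_add_iff N).2 hmaj
end Aux

open scoped ENNReal

/-- for `G(n,n,p)` with independent edges of probability `p ∈ (0,1)`, the
probability that there is no perfect matching is at most `γ(n) = 2n(1−p)^n + ε_n`, and
moreover `Σ_{n≥1} n γ(n) < ∞`. -/
theorem no_perfect_matching_prob_le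
    {Ω : Type*} [MeasurableSpace Ω] (μ : Measure Ω) [IsProbabilityMeasure μ]
    (p : ℝ) (hp0 : 0 < p) (hp1 : p < 1)
    (E : ℕ → ℕ → Set Ω)
    (hEmeas : ∀ i j, MeasurableSet (E i j))
    (hindep : iIndepSet (fun q : ℕ × ℕ => E q.1 q.2) μ)
    (hprob : ∀ i j, μ (E i j) = ENNReal.ofReal p) :
    (∀ n : ℕ,
      μ {ω | ¬ ∃ M : (biGraphN E n ω).Subgraph, M.IsPerfectMatching} ≤
        ENNReal.ofReal (gammaBound p n)) ∧
    Summable (fun n : ℕ => (n : ℝ) * gammaBound p n) := by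
  constructor
  · intro n
    have h1p : (0:ℝ) ≤ 1 - p := by linarith
    calc μ {ω | ¬ ∃ M : (biGraphN E n ω).Subgraph, M.IsPerfectMatching}
        ≤ ∑ a ∈ Finset.Icc 1 ((n + 1) / 2),
            (2 * (n.choose a) * (n.choose (a - 1)) : ℝ≥0∞) *
              ENNReal.ofReal (1 - p) ^ (a * (n - a + 1)) :=
          step1 μ p hp0.le hp1.le E hEmeas hindep hprob n
      _ = ENNReal.ofReal (∑ a ∈ Finset.Icc 1 ((n + 1) / 2),
            2 * (n.choose a : ℝ) * (n.choose (a - 1)) * (1 - p) ^ (a * (n - a + 1))) := by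
          rw [ENNReal.ofReal_sum_of_nonneg (fun a _ =>
            mul_nonneg (by positivity) (pow_nonneg h1p _))]
          apply Finset.sum_congr rfl
          intro a _
          rw [ENNReal.ofReal_mul (by positivity), ← ENNReal.ofReal_pow h1p]
          congr 1
          rw [show (2 * (n.choose a : ℝ) * (n.choose (a - 1)))
              = ((2 * n.choose a * n.choose (a - 1) : ℕ) : ℝ) by push_cast; ring,
            ENNReal.ofReal_natCast]
          push_cast; ring
      _ ≤ ENNReal.ofReal (gammaBound p n) := ENNReal.ofReal_le_ofReal (step2 p hp0 hp1 n)
  · exact step3 p hp0 hp1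
end

section
/- Almost surely, the random bipartite graph G(n,n,p) (with fixed p ∈ (0,1)) has a perfect matching for all but finitely many n. -/
open Finset MeasureTheory ProbabilityTheory Filter
open scoped Classical ENNReal

lemma aux_pm_of_equiv {n : ℕ} {G : SimpleGraph (Fin n ⊕ Fin n)} (f : Fin n ≃ Fin n)
    (hadj : ∀ i, G.Adj (Sum.inl i) (Sum.inr (f i))) :
    ∃ M : G.Subgraph, M.IsPerfectMatching := by
  refine ⟨{ verts := Set.univ,
            Adj := fun u v => (∃ i, u = Sum.inl i ∧ v = Sum.inr (f i)) ∨
              (∃ i, v = Sum.inl i ∧ u = Sum.inr (f i)),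
            adj_sub := ?_,
            edge_vert := fun _ => Set.mem_univ _,
            symm := ?_ }, ?_⟩
  · rintro u v (⟨i, rfl, rfl⟩ | ⟨i, rfl, rfl⟩)
    · exact hadj i
    · exact (hadj i).symm
  · constructor
    rintro u v (h | h)
    · exact Or.inr h
    · exact Or.inl h
  · rw [SimpleGraph.Subgraph.isPerfectMatching_iff]
    rintro (i | j)
    · refine ⟨Sum.inr (f i), Or.inl ⟨i, rfl, rfl⟩, ?_⟩
      rintro w (⟨i', hi, rfl⟩ | ⟨i', rfl, hw⟩)
      · cases hi; rfl
      · exact absurd hw (by simp)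
    · refine ⟨Sum.inl (f.symm j), Or.inr ⟨f.symm j, rfl, by simp⟩, ?_⟩
      rintro w (⟨i', h, rfl⟩ | ⟨i', rfl, h⟩)
      · exact absurd h (by simp)
      · have : f i' = j := by simpa using h.symm
        rw [← this, Equiv.symm_apply_apply]

lemma aux_meas_biInter_compl {Ω : Type*} [MeasurableSpace Ω] {μ : Measure Ω}
    [IsProbabilityMeasure μ] {p : ℝ} (hp0 : 0 ≤ p) {E : ℕ → ℕ → Set Ω}
    (hEmeas : ∀ i j, MeasurableSet (E i j))
    (hindep : iIndepSet (fun q : ℕ × ℕ => E q.1 q.2) μ)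
    (hprob : ∀ i j, μ (E i j) = ENNReal.ofReal p) (F : Finset (ℕ × ℕ)) :
    μ (⋂ e ∈ F, (E e.1 e.2)ᶜ) = ENNReal.ofReal (1 - p) ^ F.card := by
  have h := (iIndepSet_iff _ μ).1 hindep F (f := fun e => (E e.1 e.2)ᶜ)
    (fun i _ => (MeasurableSpace.measurableSet_generateFrom (Set.mem_singleton _)).compl)
  rw [h]
  have hco : ∀ e ∈ F, μ ((E e.1 e.2)ᶜ) = ENNReal.ofReal (1 - p) := by
    intro e _
    rw [prob_compl_eq_one_sub (hEmeas e.1 e.2), hprob, ENNReal.ofReal_sub _ hp0,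
      ENNReal.ofReal_one]
  rw [Finset.prod_congr rfl hco, Finset.prod_const]


lemma aux_term_bound {q : ℝ} (hq0 : 0 ≤ q) (hq1 : q ≤ 1) {n k : ℕ} (hk1 : 1 ≤ k) (hkn : k ≤ n)
    (hx : (n : ℝ) ^ 2 * q ^ (n / 2) ≤ 1) :
    (n.choose k : ℝ) * (n.choose (k - 1) : ℝ) * q ^ (k * (n - (k - 1))) ≤
      (n : ℝ) ^ 2 * q ^ (n / 2) := by
  set m := min k (n + 1 - k) with hm
  have hm1 : 1 ≤ m := by omega
  have h1 : n.choose k ≤ n ^ m := by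
    rcases le_total k (n + 1 - k) with h | h
    · rw [hm, min_eq_left h]; exact Nat.choose_le_pow n k
    · rw [hm, min_eq_right h]
      calc n.choose k = n.choose (n - k) := (Nat.choose_symm hkn).symm
        _ ≤ n ^ (n - k) := Nat.choose_le_pow n (n - k)
        _ ≤ n ^ (n + 1 - k) := Nat.pow_le_pow_right (by omega) (by omega)
  have h2 : n.choose (k - 1) ≤ n ^ m := by
    rcases le_total k (n + 1 - k) with h | h
    · rw [hm, min_eq_left h]
      calc n.choose (k - 1) ≤ n ^ (k - 1) := Nat.choose_le_pow n (k - 1)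
        _ ≤ n ^ k := Nat.pow_le_pow_right (by omega) (by omega)
    · rw [hm, min_eq_right h]
      calc n.choose (k - 1) = n.choose (n - (k - 1)) := (Nat.choose_symm (by omega)).symm
        _ ≤ n ^ (n - (k - 1)) := Nat.choose_le_pow _ _
        _ = n ^ (n + 1 - k) := by congr 1; omega
  have hchoose : n.choose k * n.choose (k - 1) ≤ n ^ (2 * m) :=
    calc n.choose k * n.choose (k - 1) ≤ n ^ m * n ^ m := Nat.mul_le_mul h1 h2
      _ = n ^ (2 * m) := by rw [← pow_add]; congr 1; omega
  have hexp : m * (n / 2) ≤ k * (n - (k - 1)) := by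
    have hnn : n - (k - 1) = n + 1 - k := by omega
    rw [hnn]
    rcases le_total k (n + 1 - k) with h | h
    · rw [hm, min_eq_left h]; exact Nat.mul_le_mul le_rfl (by omega)
    · rw [hm, min_eq_right h]
      calc (n + 1 - k) * (n / 2) ≤ (n + 1 - k) * k := Nat.mul_le_mul le_rfl (by omega)
        _ = k * (n + 1 - k) := Nat.mul_comm _ _
  have hq' : q ^ (k * (n - (k - 1))) ≤ q ^ (m * (n / 2)) :=
    pow_le_pow_of_le_one hq0 hq1 hexp
  have hcr : (n.choose k : ℝ) * (n.choose (k - 1) : ℝ) ≤ (n : ℝ) ^ (2 * m) := by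
    exact_mod_cast hchoose
  have hx0 : 0 ≤ (n : ℝ) ^ 2 * q ^ (n / 2) := by positivity
  calc (n.choose k : ℝ) * (n.choose (k - 1) : ℝ) * q ^ (k * (n - (k - 1)))
      ≤ (n : ℝ) ^ (2 * m) * q ^ (m * (n / 2)) :=
        mul_le_mul hcr hq' (by positivity) (by positivity)
    _ = ((n : ℝ) ^ 2 * q ^ (n / 2)) ^ m := by
        rw [mul_pow, ← pow_mul, ← pow_mul, Nat.mul_comm m (n / 2)]
    _ ≤ ((n : ℝ) ^ 2 * q ^ (n / 2)) ^ 1 := pow_le_pow_of_le_one hx0 hx hm1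
    _ = (n : ℝ) ^ 2 * q ^ (n / 2) := pow_one _

lemma aux_summable {q : ℝ} (hq0 : 0 < q) (hq1 : q < 1) (j : ℕ) :
    Summable (fun n : ℕ => (n : ℝ) ^ j * q ^ (n / 2)) := by
  have hs0 : 0 < Real.sqrt q := Real.sqrt_pos.2 hq0
  have hs1 : Real.sqrt q < 1 := by
    rw [show (1 : ℝ) = Real.sqrt 1 by simp]
    exact Real.sqrt_lt_sqrt hq0.le hq1
  have hsum : Summable (fun n : ℕ => (Real.sqrt q)⁻¹ * ((n : ℝ) ^ j * Real.sqrt q ^ n)) :=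
    (summable_pow_mul_geometric_of_norm_lt_one (R := ℝ) (r := Real.sqrt q) j
      (by rwa [Real.norm_eq_abs, abs_of_pos hs0])).mul_left _
  refine hsum.of_nonneg_of_le (fun n => by positivity) (fun n => ?_)
  have key : q ^ (n / 2) * Real.sqrt q = Real.sqrt q ^ (2 * (n / 2) + 1) := by
    rw [pow_succ, pow_mul, Real.sq_sqrt hq0.le]
  have h1 : Real.sqrt q ^ (2 * (n / 2) + 1) ≤ Real.sqrt q ^ n :=
    pow_le_pow_of_le_one hs0.le hs1.le (by omega)
  have hq' : q ^ (n / 2) ≤ Real.sqrt q ^ n / Real.sqrt q := by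
    rw [le_div_iff₀ hs0, key]; exact h1
  calc (n : ℝ) ^ j * q ^ (n / 2) ≤ (n : ℝ) ^ j * (Real.sqrt q ^ n / Real.sqrt q) := by
        apply mul_le_mul_of_nonneg_left hq' (by positivity)
    _ = (Real.sqrt q)⁻¹ * ((n : ℝ) ^ j * Real.sqrt q ^ n) := by ring

/-- almost surely, the random bipartite graph `G(n,n,p)` (fixed `p ∈ (0,1)`,
built consistently from an i.i.d. array of edge events) has a perfect matching for all but
finitely many `n`. -/
theorem eventually_perfect_matching
    {Ω : Type*} [MeasurableSpace Ω] (μ : Measure Ω) [IsProbabilityMeasure μ]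
    (p : ℝ) (hp0 : 0 < p) (hp1 : p < 1)
    (E : ℕ → ℕ → Set Ω)
    (hEmeas : ∀ i j, MeasurableSet (E i j))
    (hindep : iIndepSet (fun q : ℕ × ℕ => E q.1 q.2) μ)
    (hprob : ∀ i j, μ (E i j) = ENNReal.ofReal p) :
    ∀ᵐ ω ∂μ, ∀ᶠ n : ℕ in atTop,
      ∃ M : (biGraphN E n ω).Subgraph, M.IsPerfectMatching := by
  classical
  set q : ℝ := 1 - p with hqdef
  have hq0 : 0 < q := by rw [hqdef]; linarith
  have hq1 : q < 1 := by rw [hqdef]; linarith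
  -- the bad events
  set A : (n : ℕ) → Finset (Fin n) → Finset (Fin n) → Set Ω := fun n S T =>
    ⋂ e ∈ (S ×ˢ Tᶜ).image (fun e : Fin n × Fin n => ((e.1 : ℕ), (e.2 : ℕ))),
      (E e.1 e.2)ᶜ with hAdef
  set B : ℕ → Set Ω := fun n =>
    ⋃ k ∈ Finset.Icc 1 n, ⋃ P ∈ (Finset.powersetCard k (univ : Finset (Fin n))) ×ˢ
      (Finset.powersetCard (k - 1) (univ : Finset (Fin n))), A n P.1 P.2 with hBdef
  -- measure of each A
  have hA : ∀ (n : ℕ) (S T : Finset (Fin n)),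
      μ (A n S T) = ENNReal.ofReal q ^ (S.card * Tᶜ.card) := by
    intro n S T
    have hinj : Function.Injective (fun e : Fin n × Fin n => ((e.1 : ℕ), (e.2 : ℕ))) := by
      intro a b hab
      simp only [Prod.mk.injEq] at hab
      exact Prod.ext (Fin.val_injective hab.1) (Fin.val_injective hab.2)
    have hcard : ((S ×ˢ Tᶜ).image (fun e : Fin n × Fin n => ((e.1 : ℕ), (e.2 : ℕ)))).card
        = S.card * Tᶜ.card := by
      rw [Finset.card_image_of_injective _ hinj, Finset.card_product]
    rw [hAdef]
    rw [aux_meas_biInter_compl hp0.le hEmeas hindep hprob, hcard]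
  -- measure bound for B n, when n is large
  have hB : ∀ n : ℕ, (n : ℝ) ^ 2 * q ^ (n / 2) ≤ 1 →
      μ (B n) ≤ ENNReal.ofReal ((n : ℝ) ^ 3 * q ^ (n / 2)) := by
    intro n hx
    have step2 : ∀ k ∈ Finset.Icc 1 n,
        μ (⋃ P ∈ (Finset.powersetCard k (univ : Finset (Fin n))) ×ˢ
            (Finset.powersetCard (k - 1) (univ : Finset (Fin n))), A n P.1 P.2)
          ≤ ENNReal.ofReal ((n : ℝ) ^ 2 * q ^ (n / 2)) := by
      intro k hk
      rw [Finset.mem_Icc] at hk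
      calc μ (⋃ P ∈ (Finset.powersetCard k (univ : Finset (Fin n))) ×ˢ
              (Finset.powersetCard (k - 1) (univ : Finset (Fin n))), A n P.1 P.2)
          ≤ ∑ P ∈ (Finset.powersetCard k (univ : Finset (Fin n))) ×ˢ
              (Finset.powersetCard (k - 1) (univ : Finset (Fin n))), μ (A n P.1 P.2) :=
            measure_biUnion_finset_le _ _
        _ = ∑ _P ∈ (Finset.powersetCard k (univ : Finset (Fin n))) ×ˢ
              (Finset.powersetCard (k - 1) (univ : Finset (Fin n))),
              ENNReal.ofReal (q ^ (k * (n - (k - 1)))) := by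
            apply Finset.sum_congr rfl
            intro P hP
            rw [Finset.mem_product, Finset.mem_powersetCard, Finset.mem_powersetCard] at hP
            rw [hA n P.1 P.2, Finset.card_compl, hP.1.2, hP.2.2, Fintype.card_fin,
              ← ENNReal.ofReal_pow hq0.le]
        _ = ((n.choose k) * (n.choose (k - 1))) •
              ENNReal.ofReal (q ^ (k * (n - (k - 1)))) := by
            rw [Finset.sum_const, Finset.card_product, Finset.card_powersetCard,
              Finset.card_powersetCard, Finset.card_univ, Fintype.card_fin]
        _ ≤ ENNReal.ofReal ((n : ℝ) ^ 2 * q ^ (n / 2)) := by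
            rw [nsmul_eq_mul, ← ENNReal.ofReal_natCast (n.choose k * n.choose (k - 1)),
              ← ENNReal.ofReal_mul (Nat.cast_nonneg _)]
            apply ENNReal.ofReal_le_ofReal
            have := aux_term_bound hq0.le hq1.le hk.1 hk.2 hx
            push_cast
            push_cast at this
            linarith
    rw [hBdef]
    calc μ (⋃ k ∈ Finset.Icc 1 n, ⋃ P ∈ (Finset.powersetCard k (univ : Finset (Fin n))) ×ˢ
          (Finset.powersetCard (k - 1) (univ : Finset (Fin n))), A n P.1 P.2)
        ≤ ∑ k ∈ Finset.Icc 1 n,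
          μ (⋃ P ∈ (Finset.powersetCard k (univ : Finset (Fin n))) ×ˢ
            (Finset.powersetCard (k - 1) (univ : Finset (Fin n))), A n P.1 P.2) :=
        measure_biUnion_finset_le _ _
      _ ≤ ∑ _k ∈ Finset.Icc 1 n, ENNReal.ofReal ((n : ℝ) ^ 2 * q ^ (n / 2)) :=
        Finset.sum_le_sum step2
      _ = n • ENNReal.ofReal ((n : ℝ) ^ 2 * q ^ (n / 2)) := by
        rw [Finset.sum_const, Nat.card_Icc]
        norm_num
      _ = ENNReal.ofReal ((n : ℝ) ^ 3 * q ^ (n / 2)) := by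
        rw [nsmul_eq_mul, ← ENNReal.ofReal_natCast, ← ENNReal.ofReal_mul (by positivity)]
        congr 1
        ring
  -- eventual smallness
  obtain ⟨N, hN⟩ : ∃ N : ℕ, ∀ n ≥ N, (n : ℝ) ^ 2 * q ^ (n / 2) ≤ 1 := by
    have ht : Tendsto (fun n : ℕ => (n : ℝ) ^ 2 * q ^ (n / 2)) atTop (nhds 0) :=
      (aux_summable hq0 hq1 2).tendsto_atTop_zero
    have hev : ∀ᶠ n : ℕ in atTop, (n : ℝ) ^ 2 * q ^ (n / 2) ≤ 1 :=
      ht.eventually (eventually_le_nhds one_pos)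
    exact eventually_atTop.mp hev
  -- summability of the measures
  have htsum : (∑' n, μ (B n)) ≠ ⊤ := by
    have hle : ∀ n, μ (B n) ≤ ENNReal.ofReal ((n : ℝ) ^ 3 * q ^ (n / 2)) +
        (if n < N then 1 else 0) := by
      intro n
      by_cases h : n < N
      · simp only [h, if_pos]
        exact le_trans prob_le_one le_add_self
      · rw [if_neg h, add_zero]
        exact hB n (hN n (by omega))
    have h1 : (∑' n : ℕ, ENNReal.ofReal ((n : ℝ) ^ 3 * q ^ (n / 2))) ≠ ⊤ := by
      rw [← ENNReal.ofReal_tsum_of_nonneg (fun n => by positivity) (aux_summable hq0 hq1 3)]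
      exact ENNReal.ofReal_ne_top
    have h2 : (∑' n : ℕ, (if n < N then (1 : ℝ≥0∞) else 0)) ≠ ⊤ := by
      rw [tsum_eq_sum (s := Finset.range N) (fun n hn => if_neg (by simpa using hn))]
      exact (ENNReal.sum_lt_top.mpr (fun a _ => by split <;> simp)).ne
    refine ne_top_of_le_ne_top (ENNReal.add_ne_top.mpr ⟨h1, h2⟩) ?_
    calc (∑' n, μ (B n)) ≤ ∑' n : ℕ, (ENNReal.ofReal ((n : ℝ) ^ 3 * q ^ (n / 2)) +
          (if n < N then (1 : ℝ≥0∞) else 0)) := ENNReal.tsum_le_tsum hle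
      _ = (∑' n : ℕ, ENNReal.ofReal ((n : ℝ) ^ 3 * q ^ (n / 2))) +
          ∑' n : ℕ, (if n < N then (1 : ℝ≥0∞) else 0) := ENNReal.tsum_add
  have hae := ae_eventually_notMem htsum
  filter_upwards [hae] with ω hω
  refine hω.mono fun n hn => ?_
  set nbr : Fin n → Finset (Fin n) :=
    fun i => univ.filter (fun j => ω ∈ E (i : ℕ) (j : ℕ)) with hnbr
  have hall : ∀ S : Finset (Fin n), S.card ≤ (S.biUnion nbr).card := by
    intro S
    by_contra hlt
    push_neg at hlt
    have hk1 : 1 ≤ S.card := by omega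
    have hkn : S.card ≤ n := by simpa using S.card_le_univ
    obtain ⟨T, hTsub, hTcard⟩ := Finset.exists_superset_card_eq
      (show (S.biUnion nbr).card ≤ S.card - 1 by omega)
      (by rw [Fintype.card_fin]; omega)
    apply hn
    rw [hBdef]
    refine Set.mem_iUnion₂.mpr ⟨S.card, Finset.mem_Icc.mpr ⟨hk1, hkn⟩, ?_⟩
    refine Set.mem_iUnion₂.mpr ⟨(S, T), ?_, ?_⟩
    · rw [Finset.mem_product]
      exact ⟨Finset.mem_powersetCard.mpr ⟨Finset.subset_univ _, rfl⟩,
        Finset.mem_powersetCard.mpr ⟨Finset.subset_univ _, hTcard⟩⟩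
    · rw [hAdef]
      refine Set.mem_iInter₂.mpr ?_
      rintro e he
      simp only [Finset.mem_image, Finset.mem_product, Finset.mem_compl] at he
      obtain ⟨⟨i, j⟩, ⟨hiS, hjT⟩, rfl⟩ := he
      simp only [Set.mem_compl_iff]
      intro hE
      exact hjT (hTsub (Finset.mem_biUnion.mpr ⟨i, hiS, by
        rw [hnbr]; exact Finset.mem_filter.mpr ⟨Finset.mem_univ _, hE⟩⟩))
  obtain ⟨f, hfinj, hf⟩ := (Finset.all_card_le_biUnion_card_iff_exists_injective nbr).mp hall
  have hbij : Function.Bijective f := Finite.injective_iff_bijective.mp hfinj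
  refine aux_pm_of_equiv (Equiv.ofBijective f hbij) fun i => ?_
  simp only [Equiv.ofBijective_apply]
  rw [biGraphN, SimpleGraph.fromRel_adj]
  refine ⟨by simp, Or.inl ⟨i, f i, rfl, rfl, ?_⟩⟩
  have hfi := hf i
  rw [hnbr] at hfi
  exact (Finset.mem_filter.mp hfi).2
end

section
/- Let p_n = √(τ_n · log n / n) with τ_n → ∞ and p_n → 0, fix ε ∈ (0,1/2), and set β_n := (1/2) n p_n (1−ε)·(1 − (1/2)p_n(1−ε)). In the random bipartite graph G(β_n, β_n, p_n), for 2 ≤ a ≤ (β_n+1)/2, the probability of the event F_a (that some side contains a set A with |A| = a, |Γ(A)| = a−1, and A∪Γ(A) connected) satisfies P(F_a) ≤ 2·C(β_n,a)·C(β_n,a−1)·(1−p_n)^{a(β_n−a+1)}·C(a(a−1), 2a−2)·p_n^{2a−2}. -/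
open Finset MeasureTheory ProbabilityTheory Filter
open scoped Classical

/-- The random bipartite graph on `Fin m ⊕ Fin m` determined by edge events `E i j`. -/
def biGraph {Ω : Type*} {m : ℕ} (E : Fin m → Fin m → Set Ω) (ω : Ω) :
    SimpleGraph (Fin m ⊕ Fin m) :=
  SimpleGraph.fromRel (fun u v => ∃ i j, u = Sum.inl i ∧ v = Sum.inr j ∧ ω ∈ E i j)

/-- The neighborhood of a vertex set `A` in the realized bipartite graph. -/
noncomputable def nbhd {Ω : Type*} {m : ℕ} (E : Fin m → Fin m → Set Ω) (ω : Ω)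
    (A : Finset (Fin m ⊕ Fin m)) : Finset (Fin m ⊕ Fin m) :=
  Finset.univ.filter (fun v => ∃ u ∈ A, (biGraph E ω).Adj u v)

/-- The event `F_a`: some set `A` of size `a` contained in one side has `|Γ(A)| = a − 1`
with the subgraph induced on `A ∪ Γ(A)` connected. -/
def blockingEvent {Ω : Type*} {m : ℕ} (E : Fin m → Fin m → Set Ω) (a : ℕ) : Set Ω :=
  {ω | ∃ A : Finset (Fin m ⊕ Fin m),
    ((∀ v ∈ A, v.isLeft = true) ∨ (∀ v ∈ A, v.isRight = true)) ∧
    A.card = a ∧ (nbhd E ω A).card = a - 1 ∧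
    ((biGraph E ω).induce
      ((A ∪ nbhd E ω A : Finset (Fin m ⊕ Fin m)) : Set (Fin m ⊕ Fin m))).Connected}

lemma biGraph_adj {Ω : Type*} {m : ℕ} (E : Fin m → Fin m → Set Ω) (ω : Ω)
    {u v : Fin m ⊕ Fin m} :
    (biGraph E ω).Adj u v ↔ ∃ i j, ω ∈ E i j ∧
      ((u = Sum.inl i ∧ v = Sum.inr j) ∨ (u = Sum.inr j ∧ v = Sum.inl i)) := by
  rw [biGraph, SimpleGraph.fromRel_adj]
  constructor
  · rintro ⟨hne, (⟨i, j, rfl, rfl, h⟩ | ⟨i, j, rfl, rfl, h⟩)⟩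
    · exact ⟨i, j, h, Or.inl ⟨rfl, rfl⟩⟩
    · exact ⟨i, j, h, Or.inr ⟨rfl, rfl⟩⟩
  · rintro ⟨i, j, h, (⟨rfl, rfl⟩ | ⟨rfl, rfl⟩)⟩
    · exact ⟨by simp, Or.inl ⟨i, j, rfl, rfl, h⟩⟩
    · exact ⟨by simp, Or.inr ⟨i, j, rfl, rfl, h⟩⟩

lemma mem_nbhd {Ω : Type*} {m : ℕ} (E : Fin m → Fin m → Set Ω) (ω : Ω)
    {A : Finset (Fin m ⊕ Fin m)} {v : Fin m ⊕ Fin m} :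
    v ∈ nbhd E ω A ↔ ∃ u ∈ A, (biGraph E ω).Adj u v := by
  simp [nbhd]


def prj {m : ℕ} (d : Fin m × Fin m) :
    (Fin m ⊕ Fin m) → (Fin m ⊕ Fin m) → Fin m × Fin m
  | Sum.inl i, Sum.inr j => (i, j)
  | Sum.inr j, Sum.inl i => (i, j)
  | _, _ => d

lemma core_count {Ω : Type*} {m : ℕ} (E : Fin m → Fin m → Set Ω) (ω : Ω)
    (s : Finset (Fin m ⊕ Fin m)) (d : Fin m × Fin m)
    (L R : Finset (Fin m))
    (hL : ∀ i, Sum.inl i ∈ s ↔ i ∈ L) (hR : ∀ j, Sum.inr j ∈ s ↔ j ∈ R)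
    (hconn : ((biGraph E ω).induce (↑s : Set (Fin m ⊕ Fin m))).Connected) :
    s.card - 1 ≤ ((L ×ˢ R).filter (fun q => ω ∈ E q.1 q.2)).card := by
  classical
  rcases s.eq_empty_or_nonempty with rfl | ⟨x, hx⟩
  · simp
  set G := biGraph E ω with hG
  set H := G.induce (↑s : Set (Fin m ⊕ Fin m)) with hH
  set P := (L ×ˢ R).filter (fun q => ω ∈ E q.1 q.2) with hP
  let v0 : (↑s : Set (Fin m ⊕ Fin m)) := ⟨x, hx⟩
  have hpar : ∀ w : (↑s : Set (Fin m ⊕ Fin m)), w ≠ v0 →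
      ∃ u, H.Adj w u ∧ H.dist u v0 < H.dist w v0 := by
    intro w hw
    have hd0 : 0 < H.dist w v0 := hconn.pos_dist_of_ne hw
    obtain ⟨p, hp⟩ := hconn.exists_walk_length_eq_dist w v0
    cases p with
    | nil => simp at hp; simp_all
    | @cons _ u _ h q =>
      refine ⟨u, h, ?_⟩
      have h1 := H.dist_le q
      simp only [SimpleGraph.Walk.length_cons] at hp
      omega
  choose pa hadj hdist using hpar
  have hdata : ∀ (w : (↑s : Set (Fin m ⊕ Fin m))) (hw : w ≠ v0), ∃ q : Fin m × Fin m,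
      q ∈ P ∧ prj d w.val (pa w hw).val = q ∧
      ((w.val = Sum.inl q.1 ∧ (pa w hw).val = Sum.inr q.2) ∨
       (w.val = Sum.inr q.2 ∧ (pa w hw).val = Sum.inl q.1)) := by
    intro w hw
    have hadj' : G.Adj w.val (pa w hw).val := hadj w hw
    rw [hG, biGraph_adj] at hadj'
    obtain ⟨i, j, hij, hcase⟩ := hadj'
    have hws : w.val ∈ s := w.2
    have hps : (pa w hw).val ∈ s := (pa w hw).2
    have hmem : (i, j) ∈ P := by
      rcases hcase with ⟨h1, h2⟩ | ⟨h1, h2⟩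
      · rw [h1] at hws; rw [h2] at hps
        exact Finset.mem_filter.mpr ⟨Finset.mem_product.mpr ⟨(hL i).mp hws, (hR j).mp hps⟩, hij⟩
      · rw [h1] at hws; rw [h2] at hps
        exact Finset.mem_filter.mpr ⟨Finset.mem_product.mpr ⟨(hL i).mp hps, (hR j).mp hws⟩, hij⟩
    refine ⟨(i, j), hmem, ?_, ?_⟩
    · rcases hcase with ⟨h1, h2⟩ | ⟨h1, h2⟩ <;> rw [h1, h2] <;> rfl
    · rcases hcase with ⟨h1, h2⟩ | ⟨h1, h2⟩
      · exact Or.inl ⟨h1, h2⟩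
      · exact Or.inr ⟨h1, h2⟩
  let F : (↑s : Set (Fin m ⊕ Fin m)) → Fin m × Fin m := fun w =>
    if hw : w = v0 then d else (hdata w hw).choose
  have hcard : (Finset.univ.erase v0).card ≤ P.card := by
    apply Finset.card_le_card_of_injOn F
    · intro w hwmem
      have hw : w ≠ v0 := (Finset.mem_erase.mp hwmem).1
      have := (hdata w hw).choose_spec.1
      simpa [F, dif_neg hw] using this
    · intro w hwmem w' hwmem' hFeq
      have hw : w ≠ v0 := by simpa using hwmem
      have hw' : w' ≠ v0 := by simpa using hwmem'
      obtain ⟨_, hprj, hsh⟩ := (hdata w hw).choose_spec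
      obtain ⟨_, hprj', hsh'⟩ := (hdata w' hw').choose_spec
      simp only [F, dif_neg hw, dif_neg hw'] at hFeq
      have hq : (hdata w hw).choose = (hdata w' hw').choose := hFeq
      have hd1 := hdist w hw
      have hd2 := hdist w' hw'
      rcases hsh with ⟨e1, e2⟩ | ⟨e1, e2⟩ <;> rcases hsh' with ⟨f1, f2⟩ | ⟨f1, f2⟩
      · exact Subtype.ext (by rw [e1, f1, hq])
      · exfalso
        have hww' : w = pa w' hw' := Subtype.ext (by rw [e1, f2, hq])
        have hw'w : w' = pa w hw := Subtype.ext (by rw [f1, e2, hq])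
        rw [← hww'] at hd2; rw [← hw'w] at hd1; omega
      · exfalso
        have hww' : w = pa w' hw' := Subtype.ext (by rw [e1, f2, hq])
        have hw'w : w' = pa w hw := Subtype.ext (by rw [f1, e2, hq])
        rw [← hww'] at hd2; rw [← hw'w] at hd1; omega
      · exact Subtype.ext (by rw [e1, f1, hq])
  have hcard2 : (Finset.univ.erase v0).card = s.card - 1 := by
    rw [Finset.card_erase_of_mem (Finset.mem_univ _), Finset.card_univ]
    congr 1
    have h := Fintype.card_congr (Equiv.subtypeEquivRight
      (fun x => (Finset.mem_coe : x ∈ (↑s : Set (Fin m ⊕ Fin m)) ↔ x ∈ s)))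
    exact h.trans (Fintype.card_coe s)
  omega

/-- with `p_n = √(τ_n log n / n)`, `τ_n → ∞`, `p_n → 0`, fixed
`ε ∈ (0,1/2)` and `β_n = (1/2) n p_n (1−ε)(1 − (1/2)p_n(1−ε))`, in `G(β_n, β_n, p_n)` the
event `F_a` for `2 ≤ a ≤ (β_n+1)/2` satisfies
`P(F_a) ≤ 2 C(β_n,a) C(β_n,a−1) (1−p_n)^{a(β_n−a+1)} C(a(a−1),2a−2) p_n^{2a−2}`. -/
theorem blockingEvent_prob_le_refined
    {Ω : Type*} [MeasurableSpace Ω] (μ : Measure Ω) [IsProbabilityMeasure μ]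
    (τ : ℕ → ℝ) (hτ : Tendsto τ atTop atTop)
    (hp0 : Tendsto (fun n : ℕ => Real.sqrt (τ n * Real.log n / n)) atTop (nhds 0))
    (ε : ℝ) (hε0 : 0 < ε) (hε : ε < 1 / 2)
    (n m : ℕ)
    (hm : (m : ℝ) = (1 / 2) * n * Real.sqrt (τ n * Real.log n / n) * (1 - ε) *
      (1 - (1 / 2) * Real.sqrt (τ n * Real.log n / n) * (1 - ε)))
    (a : ℕ) (ha2 : 2 ≤ a) (ha : (a : ℝ) ≤ ((m : ℝ) + 1) / 2)
    (E : Fin m → Fin m → Set Ω)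
    (hEmeas : ∀ i j, MeasurableSet (E i j))
    (hindep : iIndepSet (fun q : Fin m × Fin m => E q.1 q.2) μ)
    (hprob : ∀ i j, μ (E i j) = ENNReal.ofReal (Real.sqrt (τ n * Real.log n / n))) :
    μ (blockingEvent E a) ≤
      ENNReal.ofReal (2 * (m.choose a) * (m.choose (a - 1)) *
        (1 - Real.sqrt (τ n * Real.log n / n)) ^ (a * (m - a + 1)) *
        ((a * (a - 1)).choose (2 * a - 2)) *
        Real.sqrt (τ n * Real.log n / n) ^ (2 * a - 2)) := by
  classical
  have hp : 0 ≤ Real.sqrt (τ n * Real.log n / n) := Real.sqrt_nonneg _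
  set p := Real.sqrt (τ n * Real.log n / n) with hpdef
  have ham : 2 * a ≤ m + 1 := by
    have h2 : (2 * a : ℝ) ≤ (m : ℝ) + 1 := by push_cast; linarith
    exact_mod_cast h2
  have hm3 : 3 ≤ m := by omega
  have hp1 : p ≤ 1 := by
    have h1 : μ (E ⟨0, by omega⟩ ⟨0, by omega⟩) ≤ 1 := prob_le_one
    rw [hprob] at h1
    exact ENNReal.ofReal_le_one.mp h1
  set Tb : Bool → Finset (Fin m) → Finset (Fin m) → Finset (Fin m × Fin m) :=
    fun b A B => if b then A ×ˢ Bᶜ else Bᶜ ×ˢ A with hTb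
  set Ib : Bool → Finset (Fin m) → Finset (Fin m) → Finset (Fin m × Fin m) :=
    fun b A B => if b then A ×ˢ B else B ×ˢ A with hIb
  set Ev : Bool → Finset (Fin m) → Finset (Fin m) → Finset (Fin m × Fin m) → Set Ω :=
    fun b A B S => (⋂ q ∈ Tb b A B, (E q.1 q.2)ᶜ) ∩ ⋂ q ∈ S, E q.1 q.2 with hEv
  have hsub : blockingEvent E a ⊆
      ⋃ b ∈ (Finset.univ : Finset Bool),
      ⋃ A ∈ Finset.powersetCard a (Finset.univ : Finset (Fin m)),
      ⋃ B ∈ Finset.powersetCard (a - 1) (Finset.univ : Finset (Fin m)),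
      ⋃ S ∈ Finset.powersetCard (2 * a - 2) (Ib b A B), Ev b A B S := by
    intro ω hω
    obtain ⟨A, hside, hcardA, hcardN, hconn⟩ := hω
    set B := nbhd E ω A with hB
    simp only [Set.mem_iUnion, exists_prop]
    rcases hside with hsideL | hsideR
    · -- A on the left side
      set A' := Finset.univ.filter (fun i : Fin m => Sum.inl i ∈ A) with hA'
      set B' := Finset.univ.filter (fun j : Fin m => Sum.inr j ∈ B) with hB'
      have hAl : ∀ v ∈ A, ∃ i, v = Sum.inl i := by
        intro v hv
        have := hsideL v hv
        cases v with
        | inl i => exact ⟨i, rfl⟩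
        | inr j => simp at this
      have hBr : ∀ v ∈ B, ∃ j, v = Sum.inr j := by
        intro v hv
        rw [hB, mem_nbhd] at hv
        obtain ⟨u, hu, hadj⟩ := hv
        obtain ⟨i, j, hij, hcase⟩ := (biGraph_adj E ω).mp hadj
        rcases hcase with ⟨hu1, hv1⟩ | ⟨hu1, hv1⟩
        · exact ⟨j, hv1⟩
        · obtain ⟨i', hi'⟩ := hAl u hu
          rw [hi'] at hu1
          simp at hu1
      have hAeq : A = A'.image Sum.inl := by
        ext v
        simp only [Finset.mem_image, hA', Finset.mem_filter, Finset.mem_univ, true_and]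
        constructor
        · intro hv; obtain ⟨i, rfl⟩ := hAl v hv; exact ⟨i, hv, rfl⟩
        · rintro ⟨i, hi, rfl⟩; exact hi
      have hBeq : B = B'.image Sum.inr := by
        ext v
        simp only [Finset.mem_image, hB', Finset.mem_filter, Finset.mem_univ, true_and]
        constructor
        · intro hv; obtain ⟨j, rfl⟩ := hBr v hv; exact ⟨j, hv, rfl⟩
        · rintro ⟨j, hj, rfl⟩; exact hj
      have hcA' : A'.card = a := by
        rw [← hcardA, hAeq, Finset.card_image_of_injective _ Sum.inl_injective]
      have hcB' : B'.card = a - 1 := by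
        rw [← hcardN, hBeq, Finset.card_image_of_injective _ Sum.inr_injective]
      have hsL : ∀ i, Sum.inl i ∈ A ∪ B ↔ i ∈ A' := by
        intro i
        simp only [Finset.mem_union, hA', Finset.mem_filter, Finset.mem_univ, true_and]
        constructor
        · rintro (h | h)
          · exact h
          · obtain ⟨j, hj⟩ := hBr _ h; exact absurd hj (by simp)
        · exact Or.inl
      have hsR : ∀ j, Sum.inr j ∈ A ∪ B ↔ j ∈ B' := by
        intro j
        simp only [Finset.mem_union, hB', Finset.mem_filter, Finset.mem_univ, true_and]
        constructor
        · rintro (h | h)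
          · obtain ⟨i, hi⟩ := hAl _ h; exact absurd hi (by simp)
          · exact h
        · exact Or.inr
      have hdisj : Disjoint A B := by
        rw [Finset.disjoint_left]
        intro v hvA hvB
        obtain ⟨i, rfl⟩ := hAl v hvA
        obtain ⟨j, hj⟩ := hBr _ hvB
        simp at hj
      have hcs : (A ∪ B).card = 2 * a - 1 := by
        rw [Finset.card_union_of_disjoint hdisj, hcardA, hcardN]; omega
      have hcount := core_count E ω (A ∪ B) (⟨0, by omega⟩, ⟨0, by omega⟩) A' B' hsL hsR hconn
      rw [hcs] at hcount
      have hcount' : 2 * a - 2 ≤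
          ((A' ×ˢ B').filter (fun q => ω ∈ E q.1 q.2)).card := by omega
      obtain ⟨S, hSsub, hScard⟩ := Finset.exists_subset_card_eq hcount'
      have hT : ∀ q ∈ A' ×ˢ B'ᶜ, ω ∈ (E q.1 q.2)ᶜ := by
        rintro ⟨i, j⟩ hq
        rw [Finset.mem_product] at hq
        intro hE'
        have hiA : Sum.inl i ∈ A := by
          have := hq.1; rw [hA', Finset.mem_filter] at this; exact this.2
        have hjB : Sum.inr j ∈ B := by
          rw [hB, mem_nbhd]
          exact ⟨Sum.inl i, hiA, (biGraph_adj E ω).mpr ⟨i, j, hE', Or.inl ⟨rfl, rfl⟩⟩⟩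
        have hjB' : j ∈ B' := by rw [hB', Finset.mem_filter]; exact ⟨Finset.mem_univ _, hjB⟩
        exact (Finset.mem_compl.mp hq.2) hjB'
      refine ⟨true, Finset.mem_univ _, A',
        Finset.mem_powersetCard.mpr ⟨Finset.subset_univ _, hcA'⟩, B',
        Finset.mem_powersetCard.mpr ⟨Finset.subset_univ _, hcB'⟩, S, ?_, ?_⟩
      · refine Finset.mem_powersetCard.mpr ⟨?_, hScard⟩
        simp only [hIb, if_true]
        exact hSsub.trans (Finset.filter_subset _ _)
      · refine ⟨?_, ?_⟩
        · simp only [hTb, if_true]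
          exact Set.mem_iInter₂.mpr hT
        · exact Set.mem_iInter₂.mpr fun q hq => (Finset.mem_filter.mp (hSsub hq)).2
    · -- A on the right side
      set A' := Finset.univ.filter (fun j : Fin m => Sum.inr j ∈ A) with hA'
      set B' := Finset.univ.filter (fun i : Fin m => Sum.inl i ∈ B) with hB'
      have hAr : ∀ v ∈ A, ∃ j, v = Sum.inr j := by
        intro v hv
        have := hsideR v hv
        cases v with
        | inl i => simp at this
        | inr j => exact ⟨j, rfl⟩
      have hBl : ∀ v ∈ B, ∃ i, v = Sum.inl i := by
        intro v hv
        rw [hB, mem_nbhd] at hv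
        obtain ⟨u, hu, hadj⟩ := hv
        obtain ⟨i, j, hij, hcase⟩ := (biGraph_adj E ω).mp hadj
        rcases hcase with ⟨hu1, hv1⟩ | ⟨hu1, hv1⟩
        · obtain ⟨j', hj'⟩ := hAr u hu
          rw [hj'] at hu1
          simp at hu1
        · exact ⟨i, hv1⟩
      have hAeq : A = A'.image Sum.inr := by
        ext v
        simp only [Finset.mem_image, hA', Finset.mem_filter, Finset.mem_univ, true_and]
        constructor
        · intro hv; obtain ⟨j, rfl⟩ := hAr v hv; exact ⟨j, hv, rfl⟩
        · rintro ⟨j, hj, rfl⟩; exact hj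
      have hBeq : B = B'.image Sum.inl := by
        ext v
        simp only [Finset.mem_image, hB', Finset.mem_filter, Finset.mem_univ, true_and]
        constructor
        · intro hv; obtain ⟨i, rfl⟩ := hBl v hv; exact ⟨i, hv, rfl⟩
        · rintro ⟨i, hi, rfl⟩; exact hi
      have hcA' : A'.card = a := by
        rw [← hcardA, hAeq, Finset.card_image_of_injective _ Sum.inr_injective]
      have hcB' : B'.card = a - 1 := by
        rw [← hcardN, hBeq, Finset.card_image_of_injective _ Sum.inl_injective]
      have hsL : ∀ i, Sum.inl i ∈ A ∪ B ↔ i ∈ B' := by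
        intro i
        simp only [Finset.mem_union, hB', Finset.mem_filter, Finset.mem_univ, true_and]
        constructor
        · rintro (h | h)
          · obtain ⟨j, hj⟩ := hAr _ h; exact absurd hj (by simp)
          · exact h
        · exact Or.inr
      have hsR : ∀ j, Sum.inr j ∈ A ∪ B ↔ j ∈ A' := by
        intro j
        simp only [Finset.mem_union, hA', Finset.mem_filter, Finset.mem_univ, true_and]
        constructor
        · rintro (h | h)
          · exact h
          · obtain ⟨i, hi⟩ := hBl _ h; exact absurd hi (by simp)
        · exact Or.inl
      have hdisj : Disjoint A B := by
        rw [Finset.disjoint_left]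
        intro v hvA hvB
        obtain ⟨j, rfl⟩ := hAr v hvA
        obtain ⟨i, hi⟩ := hBl _ hvB
        simp at hi
      have hcs : (A ∪ B).card = 2 * a - 1 := by
        rw [Finset.card_union_of_disjoint hdisj, hcardA, hcardN]; omega
      have hcount := core_count E ω (A ∪ B) (⟨0, by omega⟩, ⟨0, by omega⟩) B' A' hsL hsR hconn
      rw [hcs] at hcount
      have hcount' : 2 * a - 2 ≤
          ((B' ×ˢ A').filter (fun q => ω ∈ E q.1 q.2)).card := by omega
      obtain ⟨S, hSsub, hScard⟩ := Finset.exists_subset_card_eq hcount'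
      have hT : ∀ q ∈ B'ᶜ ×ˢ A', ω ∈ (E q.1 q.2)ᶜ := by
        rintro ⟨i, j⟩ hq
        rw [Finset.mem_product] at hq
        intro hE'
        have hjA : Sum.inr j ∈ A := by
          have := hq.2; rw [hA', Finset.mem_filter] at this; exact this.2
        have hiB : Sum.inl i ∈ B := by
          rw [hB, mem_nbhd]
          exact ⟨Sum.inr j, hjA, (biGraph_adj E ω).mpr ⟨i, j, hE', Or.inr ⟨rfl, rfl⟩⟩⟩
        have hiB' : i ∈ B' := by rw [hB', Finset.mem_filter]; exact ⟨Finset.mem_univ _, hiB⟩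
        exact (Finset.mem_compl.mp hq.1) hiB'
      refine ⟨false, Finset.mem_univ _, A',
        Finset.mem_powersetCard.mpr ⟨Finset.subset_univ _, hcA'⟩, B',
        Finset.mem_powersetCard.mpr ⟨Finset.subset_univ _, hcB'⟩, S, ?_, ?_⟩
      · refine Finset.mem_powersetCard.mpr ⟨?_, hScard⟩
        simp only [hIb, if_false, Bool.false_eq_true]
        exact hSsub.trans (Finset.filter_subset _ _)
      · refine ⟨?_, ?_⟩
        · simp only [hTb, if_false, Bool.false_eq_true]
          exact Set.mem_iInter₂.mpr hT
        · exact Set.mem_iInter₂.mpr fun q hq => (Finset.mem_filter.mp (hSsub hq)).2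
  -- measure bound for each elementary event
  set c : ENNReal := ENNReal.ofReal ((1 - p) ^ (a * (m - a + 1)) * p ^ (2 * a - 2)) with hc
  have hEvle : ∀ b (A B : Finset (Fin m)) (S : Finset (Fin m × Fin m)),
      A ∈ Finset.powersetCard a (Finset.univ : Finset (Fin m)) →
      B ∈ Finset.powersetCard (a - 1) (Finset.univ : Finset (Fin m)) →
      S ∈ Finset.powersetCard (2 * a - 2) (Ib b A B) →
      μ (Ev b A B S) ≤ c := by
    intro b A B S hA hBm hS
    obtain ⟨hAsub, hAcard⟩ := Finset.mem_powersetCard.mp hA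
    obtain ⟨hBsub, hBcard⟩ := Finset.mem_powersetCard.mp hBm
    obtain ⟨hSsub, hScard⟩ := Finset.mem_powersetCard.mp hS
    have hdisjTS : Disjoint (Tb b A B) S := by
      rw [Finset.disjoint_left]
      intro q hqT hqS
      have hqI := hSsub hqS
      cases b
      · simp only [hTb, hIb, if_false, Bool.false_eq_true] at hqT hqI
        rw [Finset.mem_product] at hqT hqI
        exact (Finset.mem_compl.mp hqT.1) hqI.1
      · simp only [hTb, hIb, if_true] at hqT hqI
        rw [Finset.mem_product] at hqT hqI
        exact (Finset.mem_compl.mp hqT.2) hqI.2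
    have hind := (ProbabilityTheory.iIndepSet_iff_iIndep _ μ).mp hindep
    set g : Fin m × Fin m → Set Ω :=
      fun q => if q ∈ Tb b A B then (E q.1 q.2)ᶜ else E q.1 q.2 with hg
    have hmg : ∀ q ∈ Tb b A B ∪ S,
        MeasurableSet[MeasurableSpace.generateFrom {E q.1 q.2}] (g q) := by
      intro q _
      by_cases hqT : q ∈ Tb b A B
      · simp only [hg, if_pos hqT]
        exact (MeasurableSpace.measurableSet_generateFrom (Set.mem_singleton _)).compl
      · simp only [hg, if_neg hqT]
        exact MeasurableSpace.measurableSet_generateFrom (Set.mem_singleton _)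
    have hInter := hind.meas_biInter (S := Tb b A B ∪ S) hmg
    have hset : Ev b A B S = ⋂ q ∈ (Tb b A B ∪ S : Finset (Fin m × Fin m)), g q := by
      ext x
      simp only [hEv, Set.mem_inter_iff, Set.mem_iInter, Finset.mem_union]
      constructor
      · rintro ⟨h1, h2⟩ q hq
        by_cases hqT : q ∈ Tb b A B
        · simp only [hg, if_pos hqT]; exact h1 q hqT
        · rcases hq with hq | hq
          · exact absurd hq hqT
          · simp only [hg, if_neg hqT]; exact h2 q hq
      · intro h
        refine ⟨fun q hq => ?_, fun q hq => ?_⟩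
        · have := h q (Or.inl hq); simpa [hg, if_pos hq] using this
        · have hqT : q ∉ Tb b A B := fun hqT => Finset.disjoint_left.mp hdisjTS hqT hq
          have := h q (Or.inr hq); simpa [hg, if_neg hqT] using this
    have hprod : μ (Ev b A B S) =
        (1 - ENNReal.ofReal p) ^ (Tb b A B).card * ENNReal.ofReal p ^ S.card := by
      rw [hset, hInter, Finset.prod_union hdisjTS]
      congr 1
      · calc ∏ q ∈ Tb b A B, μ (g q) = ∏ _q ∈ Tb b A B, (1 - ENNReal.ofReal p) :=
              Finset.prod_congr rfl (fun q hq => by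
                simp only [hg, if_pos hq]
                rw [prob_compl_eq_one_sub (hEmeas _ _), hprob])
          _ = (1 - ENNReal.ofReal p) ^ (Tb b A B).card := Finset.prod_const _
      · calc ∏ q ∈ S, μ (g q) = ∏ _q ∈ S, ENNReal.ofReal p :=
              Finset.prod_congr rfl (fun q hq => by
                have hqT : q ∉ Tb b A B := fun hqT => Finset.disjoint_left.mp hdisjTS hqT hq
                simp only [hg, if_neg hqT]
                rw [hprob])
          _ = ENNReal.ofReal p ^ S.card := Finset.prod_const _
    have hTcard : (Tb b A B).card = a * (m - a + 1) := by
      have hBc : Bᶜ.card = m - a + 1 := by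
        rw [Finset.card_compl, hBcard, Fintype.card_fin]; omega
      cases b
      · simp only [hTb, if_false, Bool.false_eq_true]
        rw [Finset.card_product, hBc, hAcard, Nat.mul_comm]
      · simp only [hTb, if_true]
        rw [Finset.card_product, hBc, hAcard]
    rw [hprod, hTcard, hScard]
    have h1p : (1 : ENNReal) - ENNReal.ofReal p = ENNReal.ofReal (1 - p) := by
      rw [← ENNReal.ofReal_one, ← ENNReal.ofReal_sub 1 hp]
    rw [h1p, ← ENNReal.ofReal_pow (by linarith), ← ENNReal.ofReal_pow hp,
      ← ENNReal.ofReal_mul (pow_nonneg (by linarith) _)]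
  -- union bound and counting
  refine (measure_mono hsub).trans ?_
  refine le_trans (measure_biUnion_finset_le _ _) ?_
  refine le_trans (Finset.sum_le_sum fun b _ => measure_biUnion_finset_le _ _) ?_
  refine le_trans (Finset.sum_le_sum fun b _ => Finset.sum_le_sum fun A _ =>
    measure_biUnion_finset_le _ _) ?_
  refine le_trans (Finset.sum_le_sum fun b _ => Finset.sum_le_sum fun A _ =>
    Finset.sum_le_sum fun B _ => measure_biUnion_finset_le _ _) ?_
  refine le_trans (Finset.sum_le_sum fun b _ => Finset.sum_le_sum fun A hA =>
    Finset.sum_le_sum fun B hB => Finset.sum_le_sum fun S hS => hEvle b A B S hA hB hS) ?_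
  have hIcard : ∀ b (A B : Finset (Fin m)),
      A ∈ Finset.powersetCard a (Finset.univ : Finset (Fin m)) →
      B ∈ Finset.powersetCard (a - 1) (Finset.univ : Finset (Fin m)) →
      (Ib b A B).card = a * (a - 1) := by
    intro b A B hA hBm
    obtain ⟨_, hAcard⟩ := Finset.mem_powersetCard.mp hA
    obtain ⟨_, hBcard⟩ := Finset.mem_powersetCard.mp hBm
    cases b
    · simp only [hIb, if_false, Bool.false_eq_true]
      rw [Finset.card_product, hAcard, hBcard, Nat.mul_comm]
    · simp only [hIb, if_true]
      rw [Finset.card_product, hAcard, hBcard]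
  have hsum : ∑ b ∈ (Finset.univ : Finset Bool),
      ∑ A ∈ Finset.powersetCard a (Finset.univ : Finset (Fin m)),
      ∑ B ∈ Finset.powersetCard (a - 1) (Finset.univ : Finset (Fin m)),
      ∑ _S ∈ Finset.powersetCard (2 * a - 2) (Ib b A B), c
      = 2 * (m.choose a : ENNReal) * (m.choose (a - 1) : ENNReal) *
        (((a * (a - 1)).choose (2 * a - 2) : ENNReal)) * c := by
    have hbb : ∀ b ∈ (Finset.univ : Finset Bool),
        ∑ A ∈ Finset.powersetCard a (Finset.univ : Finset (Fin m)),
        ∑ B ∈ Finset.powersetCard (a - 1) (Finset.univ : Finset (Fin m)),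
        ∑ _S ∈ Finset.powersetCard (2 * a - 2) (Ib b A B), c
        = (m.choose a : ENNReal) * (m.choose (a - 1) : ENNReal) *
          (((a * (a - 1)).choose (2 * a - 2) : ENNReal)) * c := by
      intro b _
      rw [Finset.sum_congr rfl (fun A hA => Finset.sum_congr rfl (fun B hB => by
        rw [Finset.sum_const, Finset.card_powersetCard, hIcard b A B hA hB, nsmul_eq_mul]))]
      rw [Finset.sum_const, Finset.sum_const, Finset.card_powersetCard,
        Finset.card_powersetCard, Finset.card_univ, Fintype.card_fin, smul_smul,
        nsmul_eq_mul]
      push_cast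
      ring
    rw [Finset.sum_congr rfl hbb]
    simp only [Finset.sum_const, Finset.card_univ, Fintype.card_bool, nsmul_eq_mul]
    push_cast
    ring
  rw [hsum, hc]
  rw [show ((2 : ENNReal)) = ENNReal.ofReal 2 by norm_num,
    show ((m.choose a : ENNReal)) = ENNReal.ofReal (m.choose a : ℝ) by
      rw [ENNReal.ofReal_natCast],
    show ((m.choose (a-1) : ENNReal)) = ENNReal.ofReal (m.choose (a-1) : ℝ) by
      rw [ENNReal.ofReal_natCast],
    show (((a * (a - 1)).choose (2 * a - 2) : ENNReal))
        = ENNReal.ofReal (((a * (a - 1)).choose (2 * a - 2) : ℝ)) by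
      rw [ENNReal.ofReal_natCast]]
  rw [← ENNReal.ofReal_mul (by norm_num), ← ENNReal.ofReal_mul (by positivity),
    ← ENNReal.ofReal_mul (by positivity), ← ENNReal.ofReal_mul (by positivity)]
  apply ENNReal.ofReal_le_ofReal
  have h1pa : (0:ℝ) ≤ 1 - p := by linarith
  apply le_of_eq
  ring
end
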